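/- Let f be a minimal homeomorphism of a compact metric space (X, d) having the pseudo orbit tracing property. Then f is equicontinuous: for every ε > 0 there is δ > 0 such that d(x,y) < δ implies d(fⁿ(x), fⁿ(y)) < ε for all n ∈ ℤ. -/

import Mathlib

open Filter Topology

/-- The `n`-th iterate (`n ∈ ℤ`) of a homeomorphism `f`, as a map `X → X`. -/
def iterZ {X : Type*} [TopologicalSpace X] (f : X ≃ₜ X) (n : ℤ) : X → X :=
  ⇑(f.toEquiv ^ n)

/-- The ω-limit set of `x`: limits of `f^{nᵢ}(x)` along strictly increasing
sequences `0 < n₁ < n₂ < ⋯`. -/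
def posLimitSet {X : Type*} [TopologicalSpace X] (f : X ≃ₜ X) (x : X) : Set X :=
  {y | ∃ n : ℕ → ℕ, StrictMono n ∧ 0 < n 0 ∧
    Tendsto (fun i => iterZ f (n i) x) atTop (𝓝 y)}

/-- The α-limit set of `x`: limits of `f^{-nᵢ}(x)` along strictly increasing
sequences `0 < n₁ < n₂ < ⋯`. -/
def negLimitSet {X : Type*} [TopologicalSpace X] (f : X ≃ₜ X) (x : X) : Set X :=
  {y | ∃ n : ℕ → ℕ, StrictMono n ∧ 0 < n 0 ∧
    Tendsto (fun i => iterZ f (-(n i : ℤ)) x) atTop (𝓝 y)}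

/-- `x` is recurrent if it is positively or negatively recurrent. -/
def RecurrentPt {X : Type*} [TopologicalSpace X] (f : X ≃ₜ X) (x : X) : Prop :=
  x ∈ posLimitSet f x ∨ x ∈ negLimitSet f x

/-- `f` is expansive with expansivity constant `c`. -/
def ExpansiveWith {X : Type*} [MetricSpace X] (f : X ≃ₜ X) (c : ℝ) : Prop :=
  0 < c ∧ ∀ x y : X, x ≠ y → ∃ n : ℤ, c < dist (iterZ f n x) (iterZ f n y)

/-- `f` is expansive. -/
def Expansive {X : Type*} [MetricSpace X] (f : X ≃ₜ X) : Prop :=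
  ∃ c : ℝ, ExpansiveWith f c

/-- The full orbit `{fⁿ(x) : n ∈ ℤ}` of a point. -/
def fullOrbit {X : Type*} [TopologicalSpace X] (f : X ≃ₜ X) (x : X) : Set X :=
  Set.range fun n : ℤ => iterZ f n x

/-- `E` is a minimal set: nonempty, closed, invariant (`f(E) = E`), with no proper
nonempty closed invariant subset. -/
def IsMinimalSet {X : Type*} [TopologicalSpace X] (f : X ≃ₜ X) (E : Set X) : Prop :=
  E.Nonempty ∧ IsClosed E ∧ f '' E = E ∧
    ∀ E' ⊆ E, E'.Nonempty → IsClosed E' → f '' E' = E' → E' = E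

/-- `x` is almost periodic: the closure of its orbit is a minimal set. -/
def AlmostPeriodicPt {X : Type*} [TopologicalSpace X] (f : X ≃ₜ X) (x : X) : Prop :=
  IsMinimalSet f (closure (fullOrbit f x))

/-- The left shift `σ` on `ℤ → F`, as a homeomorphism. -/
def shiftH (F : Type*) [TopologicalSpace F] : (ℤ → F) ≃ₜ (ℤ → F) where
  toFun x n := x (n + 1)
  invFun x n := x (n - 1)
  left_inv x := by funext n; simp
  right_inv x := by funext n; simp
  continuous_toFun := continuous_pi fun n => continuous_apply (n + 1)
  continuous_invFun := continuous_pi fun n => continuous_apply (n - 1)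

/-- The `n`-th power (`n ∈ ℕ`) of a homeomorphism, as a homeomorphism. -/
def hpow {X : Type*} [TopologicalSpace X] (f : X ≃ₜ X) : ℕ → X ≃ₜ X
  | 0 => Homeomorph.refl X
  | n + 1 => (hpow f n).trans f

/-- The local stable set `W^s_ε(x)`. -/
def localStable {X : Type*} [MetricSpace X] (f : X ≃ₜ X) (ε : ℝ) (x : X) : Set X :=
  {y | ∀ n : ℕ, dist (iterZ f n x) (iterZ f n y) ≤ ε}

/-- The local unstable set `W^u_ε(x)`. -/
def localUnstable {X : Type*} [MetricSpace X] (f : X ≃ₜ X) (ε : ℝ) (x : X) : Set X :=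
  {y | ∀ n : ℕ, dist (iterZ f (-(n : ℤ)) x) (iterZ f (-(n : ℤ)) y) ≤ ε}

/-- The stable set `W^s(x)`. -/
def stableSet {X : Type*} [MetricSpace X] (f : X ≃ₜ X) (x : X) : Set X :=
  {y | Tendsto (fun n : ℕ => dist (iterZ f n x) (iterZ f n y)) atTop (𝓝 0)}

/-- The unstable set `W^u(x)`. -/
def unstableSet {X : Type*} [MetricSpace X] (f : X ≃ₜ X) (x : X) : Set X :=
  {y | Tendsto (fun n : ℕ => dist (iterZ f (-(n : ℤ)) x) (iterZ f (-(n : ℤ)) y)) atTop (𝓝 0)}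

/-- `f` has the pseudo orbit tracing property. -/
def POTP {X : Type*} [MetricSpace X] (f : X ≃ₜ X) : Prop :=
  ∀ ε > (0 : ℝ), ∃ δ > (0 : ℝ), ∀ u : ℤ → X,
    (∀ i : ℤ, dist (f (u i)) (u (i + 1)) < δ) →
    ∃ x : X, ∀ i : ℤ, dist (iterZ f i x) (u i) < ε

section AuxIterZ

variable {X : Type*} [TopologicalSpace X] (f : X ≃ₜ X)

lemma iterZ_add (a b : ℤ) (x : X) : iterZ f (a + b) x = iterZ f a (iterZ f b x) := by
  simp [iterZ, zpow_add, Equiv.Perm.mul_apply]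

lemma iterZ_zero (x : X) : iterZ f 0 x = x := by simp [iterZ]

lemma iterZ_one (x : X) : iterZ f 1 x = f x := by simp [iterZ]

lemma iterZ_neg_one (w : X) : iterZ f (-1) w = f.symm w := by
  simp [iterZ, zpow_neg, zpow_one]

lemma continuous_iterZ (k : ℤ) : Continuous (iterZ f k) := by
  induction k using Int.induction_on with
  | zero => simpa [iterZ] using continuous_id
  | succ n ih =>
      have : iterZ f (n + 1) = iterZ f n ∘ f := by
        funext x
        have := iterZ_add f n 1 x
        simpa [iterZ_one] using this
      rw [this]; exact ih.comp f.continuous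
  | pred n ih =>
      have : iterZ f (-n - 1) = iterZ f (-n) ∘ f.symm := by
        funext x
        have h := iterZ_add f (-n) (-1) x
        have h1 : iterZ f (-1) x = f.symm x := by
          simp [iterZ, zpow_neg, zpow_one]
        rw [h1] at h
        simpa [sub_eq_add_neg] using h
      rw [this]; exact ih.comp f.symm.continuous

end AuxIterZ

lemma exists_return {X : Type*} [MetricSpace X] [CompactSpace X] (f : X ≃ₜ X)
    (hmin : ∀ x : X, Dense (fullOrbit f x)) (x : X) {δ : ℝ} (hδ : 0 < δ) :
    ∃ n : ℕ, 1 ≤ n ∧ dist (iterZ f (n : ℤ) x) x < δ := by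
  set S : ℕ → Set X := fun N => closure (Set.range fun k : ℕ => iterZ f ((N : ℤ) + 1 + k) x)
    with hS
  have hanti : ∀ M N : ℕ, M ≤ N → S N ⊆ S M := by
    intro M N hMN
    apply closure_mono
    rintro - ⟨k, rfl⟩
    refine ⟨(N - M) + k, ?_⟩
    show iterZ f ((M : ℤ) + 1 + ((N - M) + k : ℕ)) x = _
    have h : (M : ℤ) + 1 + (((N - M) + k : ℕ) : ℤ) = (N : ℤ) + 1 + (k : ℤ) := by omega
    rw [h]
  have hSne : ∀ N, (S N).Nonempty := fun N =>
    ⟨iterZ f ((N : ℤ) + 1 + 0) x, subset_closure ⟨0, rfl⟩⟩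
  have hScl : ∀ N, IsClosed (S N) := fun N => isClosed_closure
  have hdir : Directed (· ⊇ ·) S := fun i j =>
    ⟨max i j, hanti i _ (le_max_left _ _), hanti j _ (le_max_right _ _)⟩
  set Ω := ⋂ N, S N with hΩ
  have hΩne : Ω.Nonempty :=
    IsCompact.nonempty_iInter_of_directed_nonempty_isCompact_isClosed S hdir hSne
      (fun N => (hScl N).isCompact) hScl
  have hfS : ∀ N, f '' S N = S (N + 1) := by
    intro N
    simp only [hS]
    rw [f.image_closure, ← Set.range_comp]
    refine congrArg closure (congrArg Set.range ?_)
    funext k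
    have := iterZ_add f 1 ((N : ℤ) + 1 + k) x
    simp only [Function.comp_apply, ← iterZ_one f, ← this]
    congr 1
    push_cast
    ring
  have hfΩ : f '' Ω = Ω := by
    rw [hΩ, Set.image_iInter f.bijective]
    have h1 : ⋂ N, f '' S N = ⋂ N, S (N + 1) := Set.iInter_congr fun N => hfS N
    rw [h1]
    apply le_antisymm
    · intro w hw
      simp only [Set.mem_iInter] at hw ⊢
      intro N
      cases N with
      | zero => exact hanti 0 1 (by norm_num) (hw 0)
      | succ m => exact hw m
    · intro w hw
      simp only [Set.mem_iInter] at hw ⊢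
      intro N
      exact hw (N + 1)
  have hΩcl : IsClosed Ω := isClosed_iInter hScl
  obtain ⟨y, hy⟩ := hΩne
  have hΩpre : f ⁻¹' Ω = Ω := by
    conv_lhs => rw [← hfΩ]
    exact Set.preimage_image_eq Ω f.injective
  have horb : ∀ k : ℤ, iterZ f k y ∈ Ω := by
    intro k
    induction k using Int.induction_on with
    | zero => rwa [iterZ_zero]
    | succ m ih =>
        have : iterZ f ((m : ℤ) + 1) y = f (iterZ f (m : ℤ) y) := by
          rw [show ((m : ℤ) + 1) = 1 + (m : ℤ) from by ring, iterZ_add, iterZ_one]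
        rw [this, ← hfΩ]
        exact ⟨_, ih, rfl⟩
    | pred m ih =>
        have : iterZ f (-m - 1) y = f.symm (iterZ f (-m) y) := by
          rw [show -(m : ℤ) - 1 = -1 + -m by ring, iterZ_add, iterZ_neg_one]
        rw [this, ← hΩpre]
        simp only [Set.mem_preimage, Homeomorph.apply_symm_apply]
        exact ih
  have hdense : Dense Ω := (hmin y).mono (by rintro - ⟨k, rfl⟩; exact horb k)
  have hΩuniv : Ω = Set.univ := by
    rw [← hΩcl.closure_eq]
    exact hdense.closure_eq
  have hx : x ∈ S 0 := by
    have : x ∈ Ω := hΩuniv ▸ Set.mem_univ x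
    exact Set.mem_iInter.1 this 0
  simp only [hS] at hx
  rw [Metric.mem_closure_iff] at hx
  obtain ⟨b, ⟨k, rfl⟩, hb⟩ := hx δ hδ
  refine ⟨1 + k, by omega, ?_⟩
  rw [dist_comm]
  convert hb using 3
  push_cast; ring


/-- (Mai–Ye) A minimal homeomorphism of a compact metric space with the
pseudo orbit tracing property is equicontinuous. -/
theorem stmt_15 {X : Type*} [MetricSpace X] [CompactSpace X] (f : X ≃ₜ X)
    (hmin : ∀ x : X, Dense (fullOrbit f x)) (hpotp : POTP f) :
    ∀ ε > (0 : ℝ), ∃ δ > (0 : ℝ), ∀ x y : X, dist x y < δ →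
      ∀ n : ℤ, dist (iterZ f n x) (iterZ f n y) < ε := by
  classical
  intro ε hε
  rcases isEmpty_or_nonempty X with hX | hX
  · exact ⟨1, one_pos, fun x => (hX.false x).elim⟩
  obtain ⟨x⟩ := hX
  set ε' := ε / 5 with hε'def
  have hε'pos : 0 < ε' := by positivity
  obtain ⟨δ, hδpos, htrace⟩ := hpotp ε' hε'pos
  obtain ⟨n, hn1, hret⟩ := exists_return f hmin x hδpos
  have hnpos : (0 : ℤ) < (n : ℤ) := by exact_mod_cast hn1
  have hnne : (n : ℤ) ≠ 0 := ne_of_gt hnpos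
  -- the periodic pseudo-orbit through x
  set u : ℤ → X := fun i => iterZ f (i % (n : ℤ)) x with hu
  have hmod : ∀ i : ℤ, (i + 1) % (n : ℤ) = (i % n + 1) % n := by
    intro i
    have e : i + 1 = (i % n + 1) + (n : ℤ) * (i / n) := by
      have := Int.emod_add_mul_ediv i (n : ℤ); linarith
    rw [e, Int.add_mul_emod_self_left]
  have hjump : ∀ i : ℤ, dist (f (u i)) (u (i + 1)) < δ := by
    intro i
    have hr0 : 0 ≤ i % n := Int.emod_nonneg i hnne
    have hrn : i % n < n := Int.emod_lt_of_pos i hnpos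
    have hfu : f (u i) = iterZ f (i % n + 1) x := by
      rw [hu]
      simp only []
      rw [show i % (n : ℤ) + 1 = 1 + i % n by ring, iterZ_add, iterZ_one]
    by_cases hc : i % n + 1 < n
    · have : (i + 1) % (n : ℤ) = i % n + 1 := by
        rw [hmod i, Int.emod_eq_of_lt (by omega) hc]
      rw [hfu, hu]
      simp only [this]
      rw [dist_self]
      exact hδpos
    · have hceq : i % n + 1 = n := by omega
      have h1 : (i + 1) % (n : ℤ) = 0 := by
        rw [hmod i, hceq, Int.emod_self]
      rw [hfu, hceq, hu]
      simp only [h1]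
      rw [iterZ_zero]
      exact hret
  obtain ⟨z, hz⟩ := htrace u hjump
  -- the trapped set
  set Λ : Set X := {w | ∀ i : ℤ, dist (iterZ f i w) (iterZ f (i % n) x) ≤ 2 * ε'} with hΛ
  have hzΛ : z ∈ Λ := by
    intro i
    have := hz i
    rw [hu] at this
    have h2 : ε' ≤ 2 * ε' := by linarith
    exact le_trans (le_of_lt this) h2
  have hΛcl : IsClosed Λ := by
    have : Λ = ⋂ i : ℤ, {w | dist (iterZ f i w) (iterZ f (i % n) x) ≤ 2 * ε'} := by
      ext w; simp [hΛ, Set.mem_iInter]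
    rw [this]
    exact isClosed_iInter fun i =>
      isClosed_le ((continuous_iterZ f i).dist continuous_const) continuous_const
  have hΛshift : ∀ (s : ℤ), s % (n : ℤ) = 0 → ∀ w ∈ Λ, iterZ f s w ∈ Λ := by
    intro s hs w hw i
    have h := hw (i + s)
    rw [iterZ_add] at h
    have : (i + s) % (n : ℤ) = i % n := by
      obtain ⟨t, rfl⟩ : ∃ t, s = (n : ℤ) * t := ⟨s / n, by
        have := Int.emod_add_mul_ediv s (n : ℤ); rw [hs] at this; linarith⟩
      exact Int.add_mul_emod_self_left ..
    rw [this] at h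
    exact h
  -- Zorn: a minimal invariant subset of Λ
  set C : Set (Set X) := {E | E ⊆ Λ ∧ E.Nonempty ∧ IsClosed E ∧ iterZ f (n : ℤ) '' E = E}
    with hC
  have hbij : ∀ k : ℤ, Function.Bijective (iterZ f k) := fun k => (f.toEquiv ^ k).bijective
  have hΛC : Λ ∈ C := by
    refine ⟨le_refl _, ⟨z, hzΛ⟩, hΛcl, ?_⟩
    apply le_antisymm
    · rintro - ⟨w, hw, rfl⟩
      exact hΛshift n (Int.emod_self) w hw
    · intro w hw
      refine ⟨iterZ f (-(n : ℤ)) w, hΛshift (-(n : ℤ)) (by rw [show -(n : ℤ) = (n : ℤ) * (-1) by ring]; exact Int.mul_emod_right _ _) w hw, ?_⟩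
      rw [← iterZ_add, show (n : ℤ) + -(n : ℤ) = 0 by ring, iterZ_zero]
  -- Zorn's lemma
  have hzorn : ∃ M, M ⊆ Λ ∧ M ∈ C ∧ ∀ E ∈ C, E ⊆ M → E = M := by
    have hch : ∀ c ⊆ C, IsChain (· ⊆ ·) c → c.Nonempty → ∃ lb ∈ C, ∀ s ∈ c, lb ⊆ s := by
      intro c hcC hchain hcne
      refine ⟨⋂₀ c, ?_, fun s hs => Set.sInter_subset_of_mem hs⟩
      haveI : Nonempty c := Set.nonempty_coe_sort.mpr hcne
      obtain ⟨s₀, hs₀⟩ := hcne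
      have hne : (⋂₀ c).Nonempty := by
        apply IsCompact.nonempty_sInter_of_directed_nonempty_isCompact_isClosed
        · intro a ha b hb
          rcases hchain.total ha hb with h | h
          · exact ⟨a, ha, Set.Subset.refl a, h⟩
          · exact ⟨b, hb, h, Set.Subset.refl b⟩
        · exact fun U hU => (hcC hU).2.1
        · exact fun U hU => (hcC hU).2.2.1.isCompact
        · exact fun U hU => (hcC hU).2.2.1
      refine ⟨?_, hne, isClosed_sInter fun U hU => (hcC hU).2.2.1, ?_⟩
      · exact (Set.sInter_subset_of_mem hs₀).trans (hcC hs₀).1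
      · rw [Set.sInter_eq_iInter, Set.image_iInter (hbij (n : ℤ))]
        exact Set.iInter_congr fun U => (hcC U.2).2.2.2
    obtain ⟨M, hM1, hM2⟩ := zorn_superset_nonempty C hch Λ hΛC
    exact ⟨M, hM1, hM2.1, fun E hE hEM => le_antisymm hEM (hM2.2 hE hEM)⟩
  obtain ⟨hMΛ, ⟨-, hMne, hMcl, hMF⟩, hMmin⟩ := hzorn.choose_spec
  set M := hzorn.choose with hMdef
  -- the pieces
  set P : ℤ → Set X := fun i => iterZ f i '' M with hP
  have hcomp : ∀ (a b : ℤ) (E : Set X), iterZ f a '' (iterZ f b '' E) = iterZ f (a + b) '' E := by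
    intro a b E
    have hfun : iterZ f a ∘ iterZ f b = iterZ f (a + b) :=
      funext fun w => (iterZ_add f a b w).symm
    rw [← Set.image_comp, hfun]
  have hP0 : P 0 = M := by
    rw [hP]
    simp only []
    have : iterZ f 0 = id := funext fun w => iterZ_zero f w
    rw [this, Set.image_id]
  have hMZ : ∀ t : ℤ, iterZ f ((n : ℤ) * t) '' M = M := by
    intro t
    induction t using Int.induction_on with
    | zero =>
        rw [show (n : ℤ) * 0 = 0 by ring]
        have : iterZ f 0 = id := funext fun w => iterZ_zero f w
        rw [this, Set.image_id]
    | succ t ih =>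
        rw [show (n : ℤ) * (t + 1) = (n : ℤ) + (n : ℤ) * t by ring, ← hcomp, ih, hMF]
    | pred t ih =>
        have hback : iterZ f (-(n : ℤ)) '' M = M := by
          conv_lhs => rw [← hMF]
          rw [hcomp, show -(n : ℤ) + n = 0 by ring]
          have : iterZ f 0 = id := funext fun w => iterZ_zero f w
          rw [this, Set.image_id]
        rw [show (n : ℤ) * (-t - 1) = -(n : ℤ) + (n : ℤ) * (-t) by ring, ← hcomp, ih, hback]
  have hPmod : ∀ i : ℤ, P i = P (i % (n : ℤ)) := by
    intro i
    rw [hP]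
    simp only []
    conv_lhs => rw [show i = i % (n : ℤ) + (n : ℤ) * (i / n) from by
      have := Int.emod_add_mul_ediv i (n : ℤ); linarith]
    rw [← hcomp, hMZ]
  have hPsmall : ∀ i : ℤ, ∀ p ∈ P i, dist p (iterZ f (i % (n : ℤ)) x) ≤ 2 * ε' := by
    rintro i - ⟨w, hwM, rfl⟩
    exact hMΛ hwM i
  have hPcl : ∀ i : ℤ, IsClosed (P i) :=
    fun i => (hMcl.isCompact.image (continuous_iterZ f i)).isClosed
  have hPne : ∀ i : ℤ, (P i).Nonempty := fun i => hMne.image _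
  have hPF : ∀ i : ℤ, iterZ f (n : ℤ) '' P i = P i := by
    intro i
    rw [hP]
    simp only []
    rw [hcomp, show (n : ℤ) + i = i + n by ring, ← hcomp, hMF]
  have hPminimal : ∀ i : ℤ, ∀ E, E ⊆ P i → E.Nonempty → IsClosed E →
      iterZ f (n : ℤ) '' E = E → E = P i := by
    intro i E hEP hEne hEcl hEF
    have hD : iterZ f (-i) '' E ⊆ M := by
      have h1 : iterZ f (-i) '' E ⊆ iterZ f (-i) '' P i := Set.image_mono hEP
      rwa [hP, hcomp, show -i + i = 0 by ring,
        show iterZ f 0 = id from funext fun w => iterZ_zero f w, Set.image_id] at h1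
    have hDC : iterZ f (-i) '' E ∈ C := by
      refine ⟨hD.trans hMΛ, hEne.image _, (hEcl.isCompact.image (continuous_iterZ f (-i))).isClosed, ?_⟩
      rw [hcomp, show (n : ℤ) + -i = -i + n by ring, ← hcomp, hEF]
    have hDM := hMmin _ hDC hD
    -- now E = P i
    have : iterZ f i '' (iterZ f (-i) '' E) = iterZ f i '' M := by rw [hDM]
    rwa [hcomp, show i + -i = 0 by ring,
      show iterZ f 0 = id from funext fun w => iterZ_zero f w, Set.image_id] at this
  have hPdisj : ∀ i j : ℤ, (P i ∩ P j).Nonempty → P i = P j := by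
    intro i j hne
    have hinter : ∀ k : ℤ, iterZ f (n : ℤ) '' (P i ∩ P j) = P i ∩ P j := by
      intro k
      rw [Set.image_inter (hbij (n : ℤ)).injective, hPF, hPF]
    have h1 : P i ∩ P j = P i := hPminimal i _ Set.inter_subset_left hne
      ((hPcl i).inter (hPcl j)) (hinter 0)
    have h2 : P i ∩ P j = P j := hPminimal j _ Set.inter_subset_right hne
      ((hPcl i).inter (hPcl j)) (hinter 0)
    rw [← h1, h2]
  -- the pieces cover X
  set U : Set X := ⋃ r : Fin n, P ((r : ℕ) : ℤ) with hU
  have memU : ∀ (i : ℤ) (w : X), w ∈ P i → w ∈ U := by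
    intro i w hwP
    have h2 : w ∈ P (i % (n : ℤ)) := hPmod i ▸ hwP
    have hlt : (i % (n : ℤ)).toNat < n := by
      have h3 : i % (n : ℤ) < n := Int.emod_lt_of_pos i hnpos
      have h4 : 0 ≤ i % (n : ℤ) := Int.emod_nonneg i hnne
      omega
    refine Set.mem_iUnion.2 ⟨⟨(i % (n : ℤ)).toNat, hlt⟩, ?_⟩
    show w ∈ P (((i % (n : ℤ)).toNat : ℕ) : ℤ)
    rw [Int.toNat_of_nonneg (Int.emod_nonneg i hnne)]
    exact h2
  have hUcl : IsClosed U := isClosed_iUnion_of_finite fun r => hPcl _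
  have hUuniv : U = Set.univ := by
    obtain ⟨m₀, hm₀⟩ := hMne
    have horbU : ∀ k : ℤ, iterZ f k m₀ ∈ U := by
      intro k
      exact memU k _ ⟨m₀, hm₀, rfl⟩
    have hdense : Dense U := (hmin m₀).mono (by rintro - ⟨k, rfl⟩; exact horbU k)
    rw [← hUcl.closure_eq]
    exact hdense.closure_eq
  have hcoverU : ∀ w : X, ∃ r : Fin n, w ∈ P ((r : ℕ) : ℤ) := by
    intro w
    have : w ∈ U := hUuniv ▸ Set.mem_univ w
    exact Set.mem_iUnion.1 this
  -- the pieces are open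
  have hPopen : ∀ r : Fin n, IsOpen (P ((r : ℕ) : ℤ)) := by
    intro r
    rw [← isClosed_compl_iff]
    have heq : (P ((r : ℕ) : ℤ))ᶜ =
        ⋃ s : Fin n, (if P ((s : ℕ) : ℤ) = P ((r : ℕ) : ℤ) then (∅ : Set X)
          else P ((s : ℕ) : ℤ)) := by
      ext w
      simp only [Set.mem_compl_iff, Set.mem_iUnion]
      constructor
      · intro hw
        obtain ⟨s, hs⟩ := hcoverU w
        refine ⟨s, ?_⟩
        rw [if_neg]
        · exact hs
        · intro he; rw [he] at hs; exact hw hs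
      · rintro ⟨s, hs⟩ hwr
        by_cases he : P ((s : ℕ) : ℤ) = P ((r : ℕ) : ℤ)
        · rw [if_pos he] at hs; exact hs
        · rw [if_neg he] at hs
          exact he (hPdisj _ _ ⟨w, hs, hwr⟩)
    rw [heq]
    exact isClosed_iUnion_of_finite fun s => by
      split_ifs
      · exact isClosed_empty
      · exact hPcl _
  -- Lebesgue number
  obtain ⟨δ₀, hδ₀pos, hleb⟩ := lebesgue_number_lemma_of_metric (s := (Set.univ : Set X))
    isCompact_univ hPopen (by intro w _; exact Set.mem_iUnion.2 (hcoverU w))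
  refine ⟨δ₀, hδ₀pos, ?_⟩
  intro a b hab k
  obtain ⟨r, hr⟩ := hleb a (Set.mem_univ a)
  have ha : a ∈ P ((r : ℕ) : ℤ) := hr (Metric.mem_ball_self hδ₀pos)
  have hb : b ∈ P ((r : ℕ) : ℤ) := hr (by rw [Metric.mem_ball, dist_comm]; exact hab)
  obtain ⟨ma, hma, rfl⟩ := ha
  obtain ⟨mb, hmb, rfl⟩ := hb
  have hfa : iterZ f k (iterZ f ((r : ℕ) : ℤ) ma) ∈ P (k + ((r : ℕ) : ℤ)) :=
    ⟨ma, hma, iterZ_add f k _ ma⟩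
  have hfb : iterZ f k (iterZ f ((r : ℕ) : ℤ) mb) ∈ P (k + ((r : ℕ) : ℤ)) :=
    ⟨mb, hmb, iterZ_add f k _ mb⟩
  have h1 := hPsmall (k + ((r : ℕ) : ℤ)) _ hfa
  have h2 := hPsmall (k + ((r : ℕ) : ℤ)) _ hfb
  have h3 := dist_triangle_right (iterZ f k (iterZ f ((r : ℕ) : ℤ) ma))
    (iterZ f k (iterZ f ((r : ℕ) : ℤ) mb)) (iterZ f ((k + ((r : ℕ) : ℤ)) % (n : ℤ)) x)
  have : dist (iterZ f k (iterZ f ((r : ℕ) : ℤ) ma)) (iterZ f k (iterZ f ((r : ℕ) : ℤ) mb))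
      ≤ 4 * ε' := by linarith
  have hlt : 4 * ε' < ε := by rw [hε'def]; linarith
  linarith
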